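/- If U is an ultrafilter over a set X whose ultrapower embedding j_U has critical point κ (i.e., U is κ-complete but not κ⁺-complete), then there is a surjection from X onto κ. -/

import Mathlib

/-- If `U` is an ultrafilter over a set `X` whose ultrapower embedding has
critical point `κ` (i.e. `U` is `κ`-complete but not `κ⁺`-complete), then there is a
surjection from `X` onto `κ`. -/
theorem stmt0 {X : Type u} (U : Ultrafilter X) (κ : Cardinal.{u})
    (hcomp : ∀ (ι : Type u) (f : ι → Set X),
      Cardinal.mk ι < κ → (∀ i, f i ∈ U) → (⋂ i, f i) ∈ U)
    (hnot : ¬ ∀ (ι : Type u) (f : ι → Set X),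
      Cardinal.mk ι < Order.succ κ → (∀ i, f i ∈ U) → (⋂ i, f i) ∈ U) :
    ∃ g : X → Quotient.out κ, Function.Surjective g := by
  classical
  push_neg at hnot
  obtain ⟨ι, f, hι, hf, hfint⟩ := hnot
  have hικ : Cardinal.mk ι ≤ κ := Order.lt_succ_iff.1 hι
  -- κ is infinite
  have hinf : Cardinal.aleph0 ≤ κ := by
    by_contra h
    push_neg at h
    have : Finite ι := Cardinal.lt_aleph0_iff_finite.1 (lt_of_le_of_lt hικ h)
    exact hfint (Filter.iInter_mem.2 hf)
  -- embed ι into κ.ord.toType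
  obtain ⟨e⟩ : Nonempty (ι ↪ κ.ord.ToType) := by
    rw [← Cardinal.le_def, Cardinal.mk_ord_toType]
    exact hικ
  set T := κ.ord.ToType with hT
  have hκ0 : κ ≠ 0 := fun h => Cardinal.aleph0_ne_zero (le_antisymm (h ▸ hinf) zero_le)
  have hTne : Nonempty T := by
    refine Cardinal.mk_ne_zero_iff.1 ?_
    rw [hT, Cardinal.mk_ord_toType]
    exact hκ0
  -- the reindexed family
  set A : T → Set X := fun γ => if h : ∃ i, e i = γ then f h.choose else Set.univ with hA
  have hAmem : ∀ γ, A γ ∈ U := by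
    intro γ
    by_cases h : ∃ i, e i = γ
    · simp only [hA, dif_pos h]; exact hf _
    · simp only [hA, dif_neg h]; exact Filter.univ_mem
  have hAe : ∀ i, A (e i) = f i := by
    intro i
    have h : ∃ j, e j = e i := ⟨i, rfl⟩
    simp only [hA, dif_pos h]
    exact congrArg f (e.injective h.choose_spec)
  have hAint : (⋂ γ, A γ) ∉ U := by
    intro hmem
    refine hfint (Filter.mem_of_superset hmem ?_)
    intro x hx
    refine Set.mem_iInter.2 fun i => ?_
    have := Set.mem_iInter.1 hx (e i)
    rwa [hAe] at this
  set N : Set X := (⋂ γ, A γ)ᶜ with hNdef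
  have hN : N ∈ U := Ultrafilter.compl_mem_iff_notMem.2 hAint
  set B : T → Set X := fun γ => N ∩ ⋂ (δ : Set.Iic γ), A δ with hBdef
  have hB : ∀ γ, B γ ∈ U := by
    intro γ
    refine Filter.inter_mem hN ?_
    refine hcomp _ _ ?_ (fun δ => hAmem _)
    have h1 : Cardinal.mk (Set.Iic γ) ≤ Cardinal.mk (Set.Iio γ) + 1 := by
      rw [← Set.Iio_insert]
      exact Cardinal.mk_insert_le
    refine lt_of_le_of_lt h1 (Cardinal.add_lt_of_lt hinf ?_ ?_)
    · exact Cardinal.mk_Iio_ord_toType γ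
    · exact lt_of_lt_of_le Cardinal.one_lt_aleph0 hinf
  have hBsubA : ∀ γ, B γ ⊆ A γ := fun γ x hx =>
    Set.mem_iInter.1 hx.2 ⟨γ, le_refl γ⟩
  have hex : ∀ x : X, ∃ γ, x ∉ B γ := by
    intro x
    by_cases hx : x ∈ N
    · have : ∃ γ, x ∉ A γ := by
        by_contra h
        push_neg at h
        exact hx (Set.mem_iInter.2 h)
      obtain ⟨γ, hγ⟩ := this
      exact ⟨γ, fun hxb => hγ (hBsubA γ hxb)⟩
    · exact ⟨Classical.arbitrary T, fun hxb => hx hxb.1⟩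
  set F : X → T := fun x => (hex x).choose with hFdef
  have hF : ∀ x, x ∉ B (F x) := fun x => (hex x).choose_spec
  have hκrange : κ ≤ Cardinal.mk (Set.range F) := by
    by_contra h
    push_neg at h
    have hmem := hcomp (Set.range F) (fun γ => B γ) h (fun γ => hB _)
    have hempty : (⋂ (γ : Set.range F), B γ) = ∅ := by
      refine Set.eq_empty_iff_forall_notMem.2 fun x hx => ?_
      exact hF x (Set.mem_iInter.1 hx ⟨F x, Set.mem_range_self x⟩)
    rw [hempty] at hmem
    exact Ultrafilter.empty_notMem hmem
  have hκX : κ ≤ Cardinal.mk X := hκrange.trans Cardinal.mk_range_le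
  have hout : Cardinal.mk (Quotient.out κ) ≤ Cardinal.mk X := by
    rw [Cardinal.mk_out]; exact hκX
  obtain ⟨g0⟩ := Cardinal.le_def _ _ |>.1 hout
  have : Nonempty (Quotient.out κ) := by
    rw [← Cardinal.mk_ne_zero_iff, Cardinal.mk_out]
    exact fun h => Cardinal.aleph0_ne_zero (le_antisymm (h ▸ hinf) zero_le)
  exact ⟨Function.invFun g0, Function.invFun_surjective g0.injective⟩
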